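/- Let 𝒞 be a sequence of m gates on ℝⁿ where each gate is either a Givens rotation on two coordinates or multiplication of one coordinate by a nonzero constant, with composed matrices M₀ = Id, M₁, ..., M_m. Suppose ‖M_i‖·‖M_i⁻¹‖ ≤ R for all i ∈ [m], and M_m = c·F for some c ≠ 0 and F the n×n normalized Walsh–Hadamard matrix (n a power of 2). Then the number of rotation gates in 𝒞 is at least Ω(R⁻¹·n·log n); precisely, there is an absolute constant C > 0 such that the number of rotations is at least n·log₂ n/(C·R). -/

import Mathlib

open Matrix Real

/-- The spectral norm (ℓ²→ℓ² operator norm) of a real matrix. -/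
noncomputable def specNorm {m n : Type*} [Fintype m] [Fintype n] [DecidableEq n]
    (A : Matrix m n ℝ) : ℝ :=
  ‖LinearMap.toContinuousLinearMap (Matrix.toEuclideanLin A)‖

/-- A gate: either a Givens rotation on two coordinates `k < ℓ`, or
multiplication of coordinate `k` by a nonzero constant `c`. -/
inductive Gate (n : ℕ) where
  | rot (k ℓ : Fin n) (hkl : k < ℓ) (θ : ℝ) : Gate n
  | const (k : Fin n) (c : ℝ) (hc : c ≠ 0) : Gate n

/-- The matrix of a gate. -/
noncomputable def Gate.matrix {n : ℕ} : Gate n → Matrix (Fin n) (Fin n) ℝ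
  | .rot k ℓ _ θ => fun i j =>
      if i = k ∧ j = k then cos θ
      else if i = k ∧ j = ℓ then sin θ
      else if i = ℓ ∧ j = k then -sin θ
      else if i = ℓ ∧ j = ℓ then cos θ
      else if i = j then 1 else 0
  | .const k c _ => fun i j => if i = j then (if i = k then c else 1) else 0

/-- Whether a gate is a rotation. -/
def Gate.isRot {n : ℕ} : Gate n → Bool
  | .rot _ _ _ _ => true
  | .const _ _ _ => false

/-- The composed matrix `M_i` of the first `i` gates of a circuit. -/
noncomputable def composed {n m : ℕ} (g : Fin m → Gate n) : ℕ → Matrix (Fin n) (Fin n) ℝ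
  | 0 => 1
  | (i + 1) => if h : i < m then (g ⟨i, h⟩).matrix * composed g i else composed g i

/-- The normalized Walsh–Hadamard matrix of order `n = 2^k`. -/
noncomputable def walshHadamard (k : ℕ) : Matrix (Fin (2 ^ k)) (Fin (2 ^ k)) ℝ :=
  fun i j => (Real.sqrt (2 ^ k))⁻¹ *
    (-1 : ℝ) ^ (∑ t : Fin k, if i.val.testBit t.val && j.val.testBit t.val then 1 else 0 : ℕ)

/-! ### Auxiliary development -/

namespace Stmt18Aux

open scoped Matrix.Norms.L2Operator

/-! #### The scalar entropy function -/

noncomputable def psi (x : ℝ) : ℝ := x * Real.log |x|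

lemma psi_zero : psi 0 = 0 := by simp [psi]

lemma psi_one : psi 1 = 0 := by simp [psi]

lemma psi_close (t s : ℝ) (hs : 0 < s) (ht : |t| ≤ s) : |psi t - t * Real.log s| ≤ s := by
  rcases eq_or_ne t 0 with rfl | h0
  · simpa [psi] using hs.le
  · have habs : 0 < |t| := abs_pos.mpr h0
    have h1 : psi t - t * Real.log s = t * (Real.log |t| - Real.log s) := by
      simp [psi]; ring
    rw [h1, abs_mul]
    have h2 : |Real.log |t| - Real.log s| = Real.log s - Real.log |t| := by
      rw [abs_sub_comm, abs_of_nonneg]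
      exact sub_nonneg.mpr (Real.log_le_log habs ht)
    rw [h2, ← Real.log_div hs.ne' habs.ne']
    have h3 : Real.log (s / |t|) ≤ s / |t| - 1 :=
      Real.log_le_sub_one_of_pos (by positivity)
    have h4 : |t| * Real.log (s / |t|) ≤ |t| * (s / |t| - 1) :=
      mul_le_mul_of_nonneg_left h3 habs.le
    have h5 : |t| * (s / |t| - 1) = s - |t| := by field_simp
    linarith

lemma psi_add_bound (p q : ℝ) : |psi p + psi q - psi (p + q)| ≤ 3 * (|p| + |q|) := by
  rcases eq_or_ne (|p| + |q|) 0 with h | h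
  · have hp : |p| = 0 := by linarith [abs_nonneg p, abs_nonneg q]
    have hq : |q| = 0 := by linarith [abs_nonneg p, abs_nonneg q]
    rw [abs_eq_zero.mp hp, abs_eq_zero.mp hq]
    simp [psi]
  · have hs : 0 < |p| + |q| := lt_of_le_of_ne (by positivity) (Ne.symm h)
    set s := |p| + |q| with hsdef
    have e1 := psi_close p s hs (by rw [hsdef]; linarith [abs_nonneg q])
    have e2 := psi_close q s hs (by rw [hsdef]; linarith [abs_nonneg p])
    have e3 := psi_close (p + q) s hs (abs_add_le p q)
    have key : psi p + psi q - psi (p+q)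
        = (psi p - p * Real.log s) + (psi q - q * Real.log s)
          - (psi (p+q) - (p+q) * Real.log s) := by ring
    rw [key]
    calc |(psi p - p * Real.log s) + (psi q - q * Real.log s)
          - (psi (p+q) - (p+q) * Real.log s)|
        ≤ s + s + s := by
          have habsadd := abs_add_le (psi p - p * Real.log s) (psi q - q * Real.log s)
          have := abs_sub_abs_le_abs_sub ((psi p - p * Real.log s) + (psi q - q * Real.log s))
            (psi (p+q) - (p+q) * Real.log s)
          linarith [abs_sub ((psi p - p * Real.log s) + (psi q - q * Real.log s))
            ((psi (p+q) - (p+q) * Real.log s))]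
      _ = 3 * (|p| + |q|) := by rw [hsdef]; ring

lemma psi_pair (p q p' q' : ℝ) (h : p' + q' = p + q) :
    |psi p' + psi q' - (psi p + psi q)| ≤ 3*(|p'| + |q'|) + 3*(|p| + |q|) := by
  have h1 := psi_add_bound p q
  have h2 := psi_add_bound p' q'
  rw [h] at h2
  have : psi p' + psi q' - (psi p + psi q)
      = (psi p' + psi q' - psi (p+q)) - (psi p + psi q - psi (p+q)) := by ring
  rw [this]
  calc |(psi p' + psi q' - psi (p+q)) - (psi p + psi q - psi (p+q))|
      ≤ |psi p' + psi q' - psi (p+q)| + |psi p + psi q - psi (p+q)| := abs_sub _ _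
    _ ≤ 3*(|p'| + |q'|) + 3*(|p| + |q|) := by linarith

/-! #### Spectral norm facts -/

variable {n : ℕ}

lemma specNorm_eq_l2 (A : Matrix (Fin n) (Fin n) ℝ) : specNorm A = ‖A‖ := rfl

lemma specNorm_nonneg (A : Matrix (Fin n) (Fin n) ℝ) : 0 ≤ specNorm A := norm_nonneg _

lemma col_norm_le (A : Matrix (Fin n) (Fin n) ℝ) (i : Fin n) :
    Real.sqrt (∑ j, (A j i)^2) ≤ specNorm A := by
  have h := Matrix.l2_opNorm_mulVec A (EuclideanSpace.single i (1:ℝ))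
  rw [EuclideanSpace.norm_single] at h
  simp only [norm_one, mul_one] at h
  rw [specNorm_eq_l2]
  refine le_trans (le_of_eq ?_) h
  rw [EuclideanSpace.norm_eq]
  congr 1
  refine Finset.sum_congr rfl fun j _ => ?_
  have h2 : (WithLp.equiv 2 (Fin n → ℝ)) (EuclideanSpace.single i (1:ℝ)) = Pi.single i 1 := rfl
  have h3 : ((EuclideanSpace.equiv (Fin n) ℝ).symm (A *ᵥ (Pi.single i 1))) j
      = (A *ᵥ (Pi.single i (1:ℝ))) j := rfl
  have h4 : (A *ᵥ Pi.single i (1:ℝ)) j = A j i := by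
    rw [Matrix.mulVec_single]
    simp
  calc (A j i)^2 = ‖A j i‖^2 := by rw [Real.norm_eq_abs, sq_abs]
    _ = ‖((EuclideanSpace.equiv (Fin n) ℝ).symm
        (A *ᵥ (WithLp.equiv 2 (Fin n → ℝ)) (EuclideanSpace.single i (1:ℝ)))) j‖^2 := by
        rw [h2, h3, h4]

lemma row_norm_le (A : Matrix (Fin n) (Fin n) ℝ) (i : Fin n) :
    Real.sqrt (∑ j, (A i j)^2) ≤ specNorm A := by
  have h := col_norm_le Aᵀ i
  have ht : specNorm Aᵀ = specNorm A := by
    rw [specNorm_eq_l2, specNorm_eq_l2, ← Matrix.l2_opNorm_conjTranspose A]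
    congr 1
  rw [ht] at h
  simpa using h

lemma sum_abs_mul_le (A B : Matrix (Fin n) (Fin n) ℝ) (i : Fin n) :
    ∑ j, |A i j * B j i| ≤ specNorm A * specNorm B := by
  have h1 : ∑ j, |A i j * B j i| = ∑ j, |A i j| * |B j i| := by
    simp [abs_mul]
  rw [h1]
  calc ∑ j, |A i j| * |B j i|
      ≤ Real.sqrt (∑ j, |A i j|^2) * Real.sqrt (∑ j, |B j i|^2) :=
        Real.sum_mul_le_sqrt_mul_sqrt _ _ _
    _ = Real.sqrt (∑ j, (A i j)^2) * Real.sqrt (∑ j, (B j i)^2) := by simp [sq_abs]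
    _ ≤ specNorm A * specNorm B :=
        mul_le_mul (row_norm_le A i) (col_norm_le B i) (Real.sqrt_nonneg _) (specNorm_nonneg A)

/-! #### Rotation matrices -/

lemma sum_pair_support {f : Fin n → ℝ} {k l : Fin n} (hkl : k ≠ l)
    (h : ∀ t, t ≠ k → t ≠ l → f t = 0) : ∑ t, f t = f k + f l := by
  rw [← Finset.sum_pair hkl]
  exact (Finset.sum_subset (Finset.subset_univ _) (by
    intro t _ ht
    simp only [Finset.mem_insert, Finset.mem_singleton, not_or] at ht
    exact h t ht.1 ht.2)).symm

noncomputable def rotM (k l : Fin n) (θ : ℝ) : Matrix (Fin n) (Fin n) ℝ := fun i j =>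
  if i = k ∧ j = k then cos θ
  else if i = k ∧ j = l then sin θ
  else if i = l ∧ j = k then -sin θ
  else if i = l ∧ j = l then cos θ
  else if i = j then 1 else 0

noncomputable def rotInv (k l : Fin n) (θ : ℝ) : Matrix (Fin n) (Fin n) ℝ := fun i j =>
  if i = k ∧ j = k then cos θ
  else if i = k ∧ j = l then -sin θ
  else if i = l ∧ j = k then sin θ
  else if i = l ∧ j = l then cos θ
  else if i = j then 1 else 0

section rows
variable {k l : Fin n} (θ : ℝ)

lemma rotM_row_k (hkl : k ≠ l) (t : Fin n) :
    rotM k l θ k t = if t = k then cos θ else if t = l then sin θ else 0 := by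
  by_cases h1 : t = k
  · simp [rotM, h1]
  · by_cases h2 : t = l <;> simp [rotM, h1, h2, Ne.symm h1]

lemma rotM_row_l (hkl : k ≠ l) (t : Fin n) :
    rotM k l θ l t = if t = k then -sin θ else if t = l then cos θ else 0 := by
  by_cases h1 : t = k
  · simp [rotM, h1, hkl, Ne.symm hkl]
  · by_cases h2 : t = l
    · simp [rotM, h1, h2, hkl, Ne.symm hkl, Ne.symm h1]
    · simp [rotM, h1, h2, hkl, Ne.symm hkl, Ne.symm h1, Ne.symm h2]

lemma rotM_row_other {i : Fin n} (hik : i ≠ k) (hil : i ≠ l) (t : Fin n) :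
    rotM k l θ i t = if i = t then 1 else 0 := by
  simp [rotM, hik, hil]

lemma rotInv_col_k (hkl : k ≠ l) (t : Fin n) :
    rotInv k l θ t k = if t = k then cos θ else if t = l then sin θ else 0 := by
  by_cases h1 : t = k
  · simp [rotInv, h1]
  · by_cases h2 : t = l <;> simp [rotInv, h1, h2, hkl, Ne.symm hkl]

lemma rotInv_col_l (hkl : k ≠ l) (t : Fin n) :
    rotInv k l θ t l = if t = k then -sin θ else if t = l then cos θ else 0 := by
  by_cases h1 : t = k
  · simp [rotInv, h1, hkl, Ne.symm hkl]
  · by_cases h2 : t = l <;> simp [rotInv, h1, h2, hkl, Ne.symm hkl]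

lemma rotInv_col_other {j : Fin n} (hjk : j ≠ k) (hjl : j ≠ l) (t : Fin n) :
    rotInv k l θ t j = if t = j then 1 else 0 := by
  by_cases h1 : t = k
  · simp [rotInv, h1, Ne.symm hjk, Ne.symm hjl, hjk, hjl]
  · by_cases h2 : t = l
    · simp [rotInv, h1, h2, Ne.symm hjk, Ne.symm hjl, hjk, hjl]
    · simp [rotInv, h1, h2]

end rows

section sums
variable {k l : Fin n}

lemma sum_if_two (hkl : k ≠ l) (a b : ℝ) (g : Fin n → ℝ) :
    ∑ t, (if t = k then a else if t = l then b else 0) * g t = a * g k + b * g l := by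
  rw [sum_pair_support hkl (fun t ht1 ht2 => by simp [ht1, ht2])]
  simp [hkl, Ne.symm hkl]

lemma sum_if_two' (hkl : k ≠ l) (a b : ℝ) (g : Fin n → ℝ) :
    ∑ t, g t * (if t = k then a else if t = l then b else 0) = g k * a + g l * b := by
  rw [sum_pair_support hkl (fun t ht1 ht2 => by simp [ht1, ht2])]
  simp [hkl, Ne.symm hkl]

lemma sum_if_one (i : Fin n) (g : Fin n → ℝ) :
    ∑ t, (if i = t then 1 else 0) * g t = g i := by simp

lemma sum_if_one' (j : Fin n) (g : Fin n → ℝ) :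
    ∑ t, g t * (if t = j then 1 else 0) = g j := by simp

end sums

lemma rotM_mul_rotInv {k l : Fin n} (hkl : k ≠ l) (θ : ℝ) :
    rotM k l θ * rotInv k l θ = 1 := by
  ext i j
  rw [Matrix.mul_apply]
  by_cases hik : i = k
  · rw [hik]
    simp only [rotM_row_k θ hkl]
    rw [sum_if_two hkl]
    by_cases hjk : j = k
    · rw [hjk]
      simp only [rotInv_col_k θ hkl]
      simp [hkl, Ne.symm hkl, Matrix.one_apply]
      nlinarith [sin_sq_add_cos_sq θ]
    · by_cases hjl : j = l
      · rw [hjl]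
        simp only [rotInv_col_l θ hkl]
        simp [hkl, Ne.symm hkl, Matrix.one_apply, hjk]
        ring
      · simp only [rotInv_col_other θ hjk hjl]
        simp [hjk, hjl, Matrix.one_apply, Ne.symm hjk, Ne.symm hjl]
  · by_cases hil : i = l
    · rw [hil]
      simp only [rotM_row_l θ hkl]
      rw [sum_if_two hkl]
      by_cases hjk : j = k
      · rw [hjk]
        simp only [rotInv_col_k θ hkl]
        simp [hkl, Ne.symm hkl, Matrix.one_apply, hik]
        ring
      · by_cases hjl : j = l
        · rw [hjl]
          simp only [rotInv_col_l θ hkl]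
          simp [hkl, Ne.symm hkl, Matrix.one_apply]
          nlinarith [sin_sq_add_cos_sq θ]
        · simp only [rotInv_col_other θ hjk hjl]
          simp [hjk, hjl, Matrix.one_apply, Ne.symm hjk, Ne.symm hjl]
    · simp only [rotM_row_other θ hik hil]
      rw [sum_if_one]
      by_cases hjk : j = k
      · rw [hjk]
        simp only [rotInv_col_k θ hkl]
        simp [hik, hil, Matrix.one_apply, Ne.symm hik]
      · by_cases hjl : j = l
        · rw [hjl]
          simp only [rotInv_col_l θ hkl]
          simp [hik, hil, Matrix.one_apply, Ne.symm hil]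
        · simp only [rotInv_col_other θ hjk hjl]
          simp [Matrix.one_apply]

/-! #### The quasi-entropy potential -/

noncomputable def Phi (M : Matrix (Fin n) (Fin n) ℝ) : ℝ := ∑ i, ∑ j, psi (M i j * M⁻¹ j i)

lemma Phi_one : Phi (1 : Matrix (Fin n) (Fin n) ℝ) = 0 := by
  unfold Phi
  rw [inv_one]
  rw [Finset.sum_eq_zero]
  intro i _
  rw [Finset.sum_eq_zero]
  intro j _
  by_cases h : i = j
  · simp [Matrix.one_apply, h, psi_one]
  · simp [Matrix.one_apply, h, Ne.symm h, psi_zero]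

lemma Phi_rot_step (M : Matrix (Fin n) (Fin n) ℝ) {k l : Fin n} (hkl : k ≠ l) (θ : ℝ) :
    |Phi (rotM k l θ * M) - Phi M| ≤
      6 * (specNorm (rotM k l θ * M) * specNorm (rotM k l θ * M)⁻¹)
        + 6 * (specNorm M * specNorm M⁻¹) := by
  set N := rotM k l θ * M with hN
  have hNinv : N⁻¹ = M⁻¹ * rotInv k l θ := by
    rw [hN, Matrix.mul_inv_rev, Matrix.inv_eq_right_inv (rotM_mul_rotInv hkl θ)]
  have hNk : ∀ j, N k j = cos θ * M k j + sin θ * M l j := by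
    intro j; rw [hN, Matrix.mul_apply]
    simp only [rotM_row_k θ hkl]
    rw [sum_if_two hkl]
  have hNl : ∀ j, N l j = -sin θ * M k j + cos θ * M l j := by
    intro j; rw [hN, Matrix.mul_apply]
    simp only [rotM_row_l θ hkl]
    rw [sum_if_two hkl]
  have hNother : ∀ i, i ≠ k → i ≠ l → ∀ j, N i j = M i j := by
    intro i hik hil j; rw [hN, Matrix.mul_apply]
    simp only [rotM_row_other θ hik hil]
    rw [sum_if_one]
  have hNik : ∀ j, N⁻¹ j k = M⁻¹ j k * cos θ + M⁻¹ j l * sin θ := by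
    intro j; rw [hNinv, Matrix.mul_apply]
    simp only [rotInv_col_k θ hkl]
    rw [sum_if_two' hkl]
  have hNil : ∀ j, N⁻¹ j l = M⁻¹ j k * (-sin θ) + M⁻¹ j l * cos θ := by
    intro j; rw [hNinv, Matrix.mul_apply]
    simp only [rotInv_col_l θ hkl]
    rw [sum_if_two' hkl]
  have hNiother : ∀ i, i ≠ k → i ≠ l → ∀ j, N⁻¹ j i = M⁻¹ j i := by
    intro i hik hil j; rw [hNinv, Matrix.mul_apply]
    simp only [rotInv_col_other θ hik hil]
    rw [sum_if_one']
  have hdiff : Phi N - Phi M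
      = ∑ j, ((psi (N k j * N⁻¹ j k) + psi (N l j * N⁻¹ j l))
          - (psi (M k j * M⁻¹ j k) + psi (M l j * M⁻¹ j l))) := by
    unfold Phi
    rw [← Finset.sum_sub_distrib]
    rw [sum_pair_support hkl
      (f := fun i => (∑ j, psi (N i j * N⁻¹ j i)) - ∑ j, psi (M i j * M⁻¹ j i))
      (by
        intro t ht1 ht2
        have : ∀ j, N t j * N⁻¹ j t = M t j * M⁻¹ j t := by
          intro j; rw [hNother t ht1 ht2 j, hNiother t ht1 ht2 j]
        simp only [this, sub_self])]
    rw [← Finset.sum_sub_distrib, ← Finset.sum_sub_distrib, ← Finset.sum_add_distrib]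
    congr 1; ext j; ring
  rw [hdiff]
  have hbound : ∀ j ∈ Finset.univ, |(psi (N k j * N⁻¹ j k) + psi (N l j * N⁻¹ j l))
          - (psi (M k j * M⁻¹ j k) + psi (M l j * M⁻¹ j l))|
      ≤ 3 * (|N k j * N⁻¹ j k| + |N l j * N⁻¹ j l|)
        + 3 * (|M k j * M⁻¹ j k| + |M l j * M⁻¹ j l|) := by
    intro j _
    apply psi_pair
    have h1 := hNk j; have h2 := hNl j; have h3 := hNik j; have h4 := hNil j
    rw [h1, h2, h3, h4]
    have hsc := sin_sq_add_cos_sq θ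
    linear_combination (M k j * M⁻¹ j k + M l j * M⁻¹ j l) * hsc
  calc |∑ j, ((psi (N k j * N⁻¹ j k) + psi (N l j * N⁻¹ j l))
          - (psi (M k j * M⁻¹ j k) + psi (M l j * M⁻¹ j l)))|
      ≤ ∑ j, |(psi (N k j * N⁻¹ j k) + psi (N l j * N⁻¹ j l))
          - (psi (M k j * M⁻¹ j k) + psi (M l j * M⁻¹ j l))| := Finset.abs_sum_le_sum_abs _ _
    _ ≤ ∑ j, (3 * (|N k j * N⁻¹ j k| + |N l j * N⁻¹ j l|)
        + 3 * (|M k j * M⁻¹ j k| + |M l j * M⁻¹ j l|)) := Finset.sum_le_sum hbound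
    _ = 3 * ((∑ j, |N k j * N⁻¹ j k|) + (∑ j, |N l j * N⁻¹ j l|))
        + 3 * ((∑ j, |M k j * M⁻¹ j k|) + (∑ j, |M l j * M⁻¹ j l|)) := by
        rw [Finset.sum_add_distrib, ← Finset.mul_sum, ← Finset.mul_sum,
          Finset.sum_add_distrib, Finset.sum_add_distrib]
    _ ≤ 6 * (specNorm N * specNorm N⁻¹) + 6 * (specNorm M * specNorm M⁻¹) := by
        have b1 := sum_abs_mul_le N N⁻¹ k
        have b2 := sum_abs_mul_le N N⁻¹ l
        have b3 := sum_abs_mul_le M M⁻¹ k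
        have b4 := sum_abs_mul_le M M⁻¹ l
        linarith

lemma Phi_diag_step (M : Matrix (Fin n) (Fin n) ℝ) (d d' : Fin n → ℝ)
    (h : ∀ i, d i * d' i = 1) :
    Phi (Matrix.diagonal d * M) = Phi M := by
  have hdd : Matrix.diagonal d * Matrix.diagonal d' = 1 := by
    rw [Matrix.diagonal_mul_diagonal]
    have : (fun i => d i * d' i) = fun _ => (1:ℝ) := funext h
    rw [this, Matrix.diagonal_one]
  have hinv : (Matrix.diagonal d * M)⁻¹ = M⁻¹ * Matrix.diagonal d' := by
    rw [Matrix.mul_inv_rev, Matrix.inv_eq_right_inv hdd]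
  unfold Phi
  rw [hinv]
  refine Finset.sum_congr rfl fun i _ => Finset.sum_congr rfl fun j _ => ?_
  rw [Matrix.diagonal_mul, Matrix.mul_diagonal]
  have : d i * M i j * (M⁻¹ j i * d' i) = (d i * d' i) * (M i j * M⁻¹ j i) := by ring
  rw [this, h i, one_mul]

/-! #### Hadamard orthogonality -/

def Ek (k x y : ℕ) : ℕ := ∑ b ∈ Finset.range k, if (x.testBit b && y.testBit b) then 1 else 0

lemma Ek_succ (k x t : ℕ) :
    Ek (k+1) x t = Ek k x t + (if (x.testBit k && t.testBit k) then 1 else 0) := by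
  rw [Ek, Finset.sum_range_succ]; rfl

lemma Ek_addpow_right (k x t0 : ℕ) : Ek k x (2^k + t0) = Ek k x t0 := by
  unfold Ek
  refine Finset.sum_congr rfl fun b hb => ?_
  rw [Nat.testBit_two_pow_add_gt (Finset.mem_range.mp hb)]

lemma Ek_addpow_left (k x0 t : ℕ) : Ek k (2^k + x0) t = Ek k x0 t := by
  unfold Ek
  refine Finset.sum_congr rfl fun b hb => ?_
  rw [Nat.testBit_two_pow_add_gt (Finset.mem_range.mp hb)]

lemma key_sum : ∀ k, ∀ x y, x < 2^k → y < 2^k →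
    (∑ t ∈ Finset.range (2^k), ((-1:ℝ)^(Ek k x t) * (-1:ℝ)^(Ek k y t)))
      = if x = y then (2^k : ℝ) else 0 := by
  intro k
  induction k with
  | zero =>
    intro x y hx hy
    interval_cases x <;> interval_cases y <;> simp [Ek]
  | succ k ih =>
    intro x y hx hy
    have hP : (0:ℕ) < 2^k := by positivity
    have hsplit : (2:ℕ)^(k+1) = 2^k + 2^k := by rw [pow_succ]; ring
    rw [hsplit, Finset.sum_range_add]
    have decomp : ∀ x : ℕ, x < 2^(k+1) → ∃ (b : Bool) (x0 : ℕ), x0 < 2^k ∧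
        x = (cond b (2^k) 0) + x0 ∧ x.testBit k = b := by
      intro x hx
      rcases Nat.lt_or_ge x (2^k) with h | h
      · exact ⟨false, x, h, by simp, Nat.testBit_lt_two_pow h⟩
      · refine ⟨true, x - 2^k, ?_, ?_, ?_⟩
        · have : x < 2^k + 2^k := by rw [← hsplit]; exact hx
          omega
        · simp; omega
        · have hx' : x = 2^k + (x - 2^k) := by omega
          rw [hx', Nat.testBit_two_pow_add_eq,
            Nat.testBit_lt_two_pow (by omega : x - 2^k < 2^k)]
          rfl
    obtain ⟨bx, x0, hx0, hxeq, hxbit⟩ := decomp x hx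
    obtain ⟨by', y0, hy0, hyeq, hybit⟩ := decomp y hy
    have hEx : ∀ t, Ek k x t = Ek k x0 t := by
      intro t; rw [hxeq]; cases bx
      · simp
      · simpa using Ek_addpow_left k x0 t
    have hEy : ∀ t, Ek k y t = Ek k y0 t := by
      intro t; rw [hyeq]; cases by'
      · simp
      · simpa using Ek_addpow_left k y0 t
    have half1 : (∑ t ∈ Finset.range (2^k), ((-1:ℝ)^(Ek (k+1) x t) * (-1:ℝ)^(Ek (k+1) y t)))
        = if x0 = y0 then (2^k:ℝ) else 0 := by
      rw [← ih x0 y0 hx0 hy0]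
      refine Finset.sum_congr rfl fun t ht => ?_
      have htk : t.testBit k = false := Nat.testBit_lt_two_pow (Finset.mem_range.mp ht)
      rw [Ek_succ, Ek_succ, htk, hEx, hEy]
      simp
    have half2 : (∑ t0 ∈ Finset.range (2^k),
          ((-1:ℝ)^(Ek (k+1) x (2^k + t0)) * (-1:ℝ)^(Ek (k+1) y (2^k + t0))))
        = ((-1:ℝ)^(cond bx 1 0 : ℕ) * (-1:ℝ)^(cond by' 1 0 : ℕ)) *
            (if x0 = y0 then (2^k:ℝ) else 0) := by
      rw [← ih x0 y0 hx0 hy0, Finset.mul_sum]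
      refine Finset.sum_congr rfl fun t0 ht0 => ?_
      have ht0k : (2^k + t0).testBit k = true := by
        rw [Nat.testBit_two_pow_add_eq,
          Nat.testBit_lt_two_pow (Finset.mem_range.mp ht0)]
        rfl
      rw [Ek_succ, Ek_succ, ht0k, Ek_addpow_right, Ek_addpow_right, hEx, hEy, hxbit, hybit]
      have hb : ∀ b : Bool, (if (b && true) then 1 else 0) = (cond b 1 0 : ℕ) := by decide
      rw [hb, hb, pow_add, pow_add]
      ring
    rw [half1, half2]
    have hxy : x = y ↔ (bx = by' ∧ x0 = y0) := by
      constructor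
      · intro h
        have hb : bx = by' := by rw [← hxbit, ← hybit, h]
        refine ⟨hb, ?_⟩
        rw [hxeq, hyeq, hb] at h
        exact Nat.add_left_cancel h
      · rintro ⟨h1, h2⟩
        rw [hxeq, hyeq, h1, h2]
    by_cases hbb : bx = by'
    · by_cases h00 : x0 = y0
      · have hxx : x = y := hxy.mpr ⟨hbb, h00⟩
        rw [if_pos h00, if_pos hxx, hbb]
        have h1 : ((-1:ℝ)^(cond by' 1 0 : ℕ) * (-1:ℝ)^(cond by' 1 0 : ℕ)) = 1 := by
          cases by' <;> norm_num
        rw [h1]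
        have h2 : (2:ℝ)^(k+1) = 2^k + 2^k := by rw [pow_succ]; ring
        rw [h2]; ring
      · have : x ≠ y := fun h => h00 (hxy.mp h).2
        rw [if_neg h00, if_neg this]
        ring
    · have : x ≠ y := fun h => hbb (hxy.mp h).1
      rw [if_neg this]
      have h1 : ((-1:ℝ)^(cond bx 1 0 : ℕ) * (-1:ℝ)^(cond by' 1 0 : ℕ)) = -1 := by
        cases bx <;> cases by' <;> first | rfl | (exfalso; exact hbb rfl) | norm_num
      rw [h1]
      ring

lemma wh_exp (k : ℕ) (i j : Fin (2^k)) :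
    (∑ t : Fin k, if i.val.testBit t.val && j.val.testBit t.val then 1 else 0 : ℕ)
      = Ek k i.val j.val := by
  rw [Ek, ← Fin.sum_univ_eq_sum_range]

lemma Ek_comm (k x y : ℕ) : Ek k x y = Ek k y x := by
  rw [Ek, Ek]
  exact Finset.sum_congr rfl fun b _ => by rw [Bool.and_comm]

lemma wh_mul_self (k : ℕ) : walshHadamard k * walshHadamard k = 1 := by
  have hpow : (0:ℝ) < (2:ℝ)^k := by positivity
  ext i j
  rw [Matrix.mul_apply]
  have hterm : ∀ t : Fin (2^k), walshHadamard k i t * walshHadamard k t j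
      = ((2:ℝ)^k)⁻¹ * ((-1:ℝ)^(Ek k i.val t.val) * (-1:ℝ)^(Ek k j.val t.val)) := by
    intro t
    unfold walshHadamard
    rw [wh_exp, wh_exp, Ek_comm k t.val j.val]
    have : (Real.sqrt (2^k))⁻¹ * (Real.sqrt (2^k))⁻¹ = ((2:ℝ)^k)⁻¹ := by
      rw [← mul_inv, Real.mul_self_sqrt hpow.le]
    rw [← this]
    ring
  rw [Finset.sum_congr rfl (fun t _ => hterm t), ← Finset.mul_sum]
  have hsum : (∑ t : Fin (2^k), ((-1:ℝ)^(Ek k i.val t.val) * (-1:ℝ)^(Ek k j.val t.val)))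
      = if i.val = j.val then ((2:ℕ)^k : ℝ) else 0 := by
    rw [Fin.sum_univ_eq_sum_range (fun tv => ((-1:ℝ)^(Ek k i.val tv) * (-1:ℝ)^(Ek k j.val tv)))]
    rw [key_sum k i.val j.val i.isLt j.isLt]
    push_cast
    rfl
  rw [hsum]
  by_cases h : i = j
  · rw [if_pos (by rw [h]), h, Matrix.one_apply_eq]
    push_cast
    field_simp
  · rw [if_neg (fun hv => h (Fin.ext hv)), Matrix.one_apply_ne h]
    ring

lemma wh_symm (k : ℕ) (i j : Fin (2^k)) : walshHadamard k i j = walshHadamard k j i := by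
  unfold walshHadamard
  rw [wh_exp, wh_exp, Ek_comm]

lemma wh_sq (k : ℕ) (i j : Fin (2^k)) : (walshHadamard k i j)^2 = ((2:ℝ)^k)⁻¹ := by
  have hpow : (0:ℝ) < (2:ℝ)^k := by positivity
  unfold walshHadamard
  rw [mul_pow, ← pow_mul, mul_comm _ 2, pow_mul]
  norm_num [sq_sqrt hpow.le]

lemma whc_inv (k : ℕ) {c : ℝ} (hc : c ≠ 0) :
    (c • walshHadamard k)⁻¹ = c⁻¹ • walshHadamard k := by
  apply Matrix.inv_eq_right_inv
  rw [Matrix.smul_mul, Matrix.mul_smul, smul_smul, mul_inv_cancel₀ hc, one_smul, wh_mul_self]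

lemma Phi_whc (k : ℕ) {c : ℝ} (hc : c ≠ 0) :
    Phi (c • walshHadamard k) = -((2:ℝ)^k * Real.log ((2:ℝ)^k)) := by
  have hpow : (0:ℝ) < (2:ℝ)^k := by positivity
  unfold Phi
  rw [whc_inv k hc]
  have hterm : ∀ i j : Fin (2^k), (c • walshHadamard k) i j * (c⁻¹ • walshHadamard k) j i
      = ((2:ℝ)^k)⁻¹ := by
    intro i j
    simp only [Matrix.smul_apply, smul_eq_mul]
    rw [wh_symm k j i]
    have : c * walshHadamard k i j * (c⁻¹ * walshHadamard k i j)
        = (c * c⁻¹) * (walshHadamard k i j)^2 := by ring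
    rw [this, mul_inv_cancel₀ hc, one_mul, wh_sq]
  have hpsi : psi (((2:ℝ)^k)⁻¹) = -(((2:ℝ)^k)⁻¹ * Real.log ((2:ℝ)^k)) := by
    rw [psi, abs_of_pos (by positivity), Real.log_inv]
    ring
  calc (∑ i : Fin (2^k), ∑ j : Fin (2^k),
        psi ((c • walshHadamard k) i j * (c⁻¹ • walshHadamard k) j i))
      = ∑ i : Fin (2^k), ∑ j : Fin (2^k), -(((2:ℝ)^k)⁻¹ * Real.log ((2:ℝ)^k)) := by
        exact Finset.sum_congr rfl fun i _ => Finset.sum_congr rfl fun j _ => by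
          rw [hterm i j, hpsi]
    _ = -((2:ℝ)^k * Real.log ((2:ℝ)^k)) := by
        rw [Finset.sum_const, Finset.sum_const]
        simp only [Finset.card_univ, Fintype.card_fin, nsmul_eq_mul]
        push_cast
        field_simp

lemma gate_rot_matrix {n : ℕ} (k l : Fin n) (h : k < l) (θ : ℝ) :
    Gate.matrix (.rot k l h θ) = rotM k l θ := rfl

lemma gate_const_matrix {n : ℕ} (k : Fin n) (c : ℝ) (hc : c ≠ 0) :
    Gate.matrix (.const k c hc) = Matrix.diagonal (fun i => if i = k then c else 1) := by
  ext i j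
  by_cases h : i = j <;> simp [Gate.matrix, Matrix.diagonal, h]

lemma card_filter_succ {m i : ℕ} (hi : i < m) (P : Fin m → Prop) [DecidablePred P] :
    (Finset.univ.filter fun t : Fin m => t.val < i + 1 ∧ P t).card
      = (Finset.univ.filter fun t : Fin m => t.val < i ∧ P t).card
        + (if P ⟨i, hi⟩ then 1 else 0) := by
  rw [Finset.card_filter, Finset.card_filter]
  have hsplit : ∀ t : Fin m, (if (t.val < i + 1 ∧ P t) then 1 else 0)
      = (if (t.val < i ∧ P t) then 1 else 0) + (if (t = ⟨i, hi⟩ ∧ P t) then 1 else 0) := by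
    intro t
    have ht : (t = (⟨i, hi⟩ : Fin m)) ↔ t.val = i := by
      rw [Fin.ext_iff]
    by_cases hP : P t <;>
      simp only [hP, and_true, and_false, if_false, ht, if_true] <;> split_ifs <;> omega
  rw [Finset.sum_congr rfl (fun t _ => hsplit t), Finset.sum_add_distrib]
  congr 1
  rw [Finset.sum_eq_single (⟨i, hi⟩ : Fin m)]
  · simp
  · intro t _ htne
    simp [htne]
  · intro h
    exact absurd (Finset.mem_univ _) h

lemma Phi_composed_bound {n m : ℕ} (g : Fin m → Gate n) (R : ℝ) (hR : 1 ≤ R)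
    (hcond : ∀ i ≤ m, specNorm (composed g i) * specNorm (composed g i)⁻¹ ≤ R) :
    ∀ i, i ≤ m → |Phi (composed g i)| ≤
      12 * R * ((Finset.univ.filter
        fun t : Fin m => t.val < i ∧ (g t).isRot = true).card : ℝ) := by
  intro i
  induction i with
  | zero =>
    intro _
    have h0 : composed g 0 = (1 : Matrix (Fin n) (Fin n) ℝ) := rfl
    rw [h0, Phi_one, abs_zero]
    positivity
  | succ i ih =>
    intro hi1
    have hi : i < m := Nat.lt_of_succ_le hi1
    have hstep : composed g (i+1) = (g ⟨i, hi⟩).matrix * composed g i := by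
      show (if h : i < m then (g ⟨i, h⟩).matrix * composed g i else composed g i) = _
      rw [dif_pos hi]
    have hprev := ih (le_of_lt hi)
    have hcard := card_filter_succ hi (fun t => (g t).isRot = true)
    have hcnt0 : (0:ℝ) ≤ ((Finset.univ.filter
        fun t : Fin m => t.val < i ∧ (g t).isRot = true).card : ℝ) := by positivity
    cases hg : g ⟨i, hi⟩ with
    | const k c hc =>
      have hPhi : Phi (composed g (i+1)) = Phi (composed g i) := by
        rw [hstep, hg, gate_const_matrix]
        exact Phi_diag_step (composed g i) _ (fun t => if t = k then c⁻¹ else 1)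
          (fun t => by by_cases h : t = k <;> simp [h, mul_inv_cancel₀ hc])
      have hrot : (g ⟨i, hi⟩).isRot = false := by rw [hg]; rfl
      rw [hPhi]
      refine le_trans hprev ?_
      have : ((Finset.univ.filter fun t : Fin m => t.val < i + 1 ∧ (g t).isRot = true).card : ℝ)
          = ((Finset.univ.filter fun t : Fin m => t.val < i ∧ (g t).isRot = true).card : ℝ) := by
        rw [hcard, hrot]
        norm_num
      rw [this]
    | rot k l hkl θ =>
      have hne : k ≠ l := ne_of_lt hkl
      have hdiff : |Phi (composed g (i+1)) - Phi (composed g i)| ≤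
          6 * (specNorm (composed g (i+1)) * specNorm (composed g (i+1))⁻¹)
            + 6 * (specNorm (composed g i) * specNorm (composed g i)⁻¹) := by
        have := Phi_rot_step (composed g i) hne θ
        rw [← gate_rot_matrix k l hkl θ, ← hg, ← hstep] at this
        exact this
      have hs1 := hcond (i+1) hi1
      have hs2 := hcond i (le_of_lt hi)
      have hrot : (g ⟨i, hi⟩).isRot = true := by rw [hg]; rfl
      have hcardR : ((Finset.univ.filter
            fun t : Fin m => t.val < i + 1 ∧ (g t).isRot = true).card : ℝ)
          = ((Finset.univ.filter
            fun t : Fin m => t.val < i ∧ (g t).isRot = true).card : ℝ) + 1 := by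
        rw [hcard, hrot]
        norm_num
      rw [hcardR]
      have htri : |Phi (composed g (i+1))| ≤
          |Phi (composed g (i+1)) - Phi (composed g i)| + |Phi (composed g i)| := by
        calc |Phi (composed g (i+1))|
            = |(Phi (composed g (i+1)) - Phi (composed g i)) + Phi (composed g i)| := by ring_nf
          _ ≤ _ := abs_add_le _ _
      calc |Phi (composed g (i+1))|
          ≤ |Phi (composed g (i+1)) - Phi (composed g i)| + |Phi (composed g i)| := htri
        _ ≤ (6 * R + 6 * R) + 12 * R * ((Finset.univ.filter
              fun t : Fin m => t.val < i ∧ (g t).isRot = true).card : ℝ) := by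
            linarith
        _ = 12 * R * (((Finset.univ.filter
              fun t : Fin m => t.val < i ∧ (g t).isRot = true).card : ℝ) + 1) := by ring

end Stmt18Aux

/-- Any `R`-uniformly well conditioned circuit of rotation and constant gates
computing a nonzero multiple of the Walsh–Hadamard transform of order `n = 2^k`
must contain at least `n·log₂ n / (C·R)` rotation gates, `C` an absolute constant. -/
theorem stmt18 :
    ∃ C : ℝ, 0 < C ∧
      ∀ (k m : ℕ) (g : Fin m → Gate (2 ^ k)) (R c : ℝ), 1 ≤ R → c ≠ 0 →
        (∀ i ≤ m, specNorm (composed g i) * specNorm (composed g i)⁻¹ ≤ R) →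
        composed g m = c • walshHadamard k →
        ((2 ^ k : ℝ) * logb 2 (2 ^ k : ℝ)) / (C * R) ≤
          ((Finset.univ.filter fun i : Fin m => (g i).isRot = true).card : ℝ) := by
  refine ⟨18, by norm_num, ?_⟩
  intro k m g R c hR hc hcond hM
  have hRpos : (0:ℝ) < R := lt_of_lt_of_le one_pos hR
  set rot : ℝ := ((Finset.univ.filter fun i : Fin m => (g i).isRot = true).card : ℝ) with hrotdef
  have hrotnn : (0:ℝ) ≤ rot := by positivity
  -- telescoped potential bound
  have hbound := Stmt18Aux.Phi_composed_bound g R hR hcond m le_rfl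
  have hfil : (Finset.univ.filter fun t : Fin m => t.val < m ∧ (g t).isRot = true)
      = (Finset.univ.filter fun t : Fin m => (g t).isRot = true) := by
    apply Finset.filter_congr
    intro t _
    simp [t.isLt]
  rw [hfil] at hbound
  -- Phi of the final matrix
  have hval : Stmt18Aux.Phi (composed g m) = -((2:ℝ)^k * Real.log ((2:ℝ)^k)) := by
    rw [hM]
    exact Stmt18Aux.Phi_whc k hc
  have hlognn : (0:ℝ) ≤ Real.log ((2:ℝ)^k) := Real.log_nonneg (one_le_pow₀ (by norm_num))
  have hprod_nn : (0:ℝ) ≤ (2:ℝ)^k * Real.log ((2:ℝ)^k) := by positivity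
  have hmain : (2:ℝ)^k * Real.log ((2:ℝ)^k) ≤ 12 * R * rot := by
    have : |Stmt18Aux.Phi (composed g m)| = (2:ℝ)^k * Real.log ((2:ℝ)^k) := by
      rw [hval, abs_neg, abs_of_nonneg hprod_nn]
    rw [this] at hbound
    exact hbound
  -- final arithmetic
  have hlog2 : (0.6931471803:ℝ) < Real.log 2 := Real.log_two_gt_d9
  have hlog2pos : (0:ℝ) < Real.log 2 := by linarith
  have hgoal : ((2:ℝ) ^ k) * Real.logb 2 ((2:ℝ) ^ k) ≤ rot * (18 * R) := by
    rw [Real.logb]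
    rw [show ((2:ℝ)^k) * (Real.log ((2:ℝ)^k) / Real.log 2)
      = ((2:ℝ)^k * Real.log ((2:ℝ)^k)) / Real.log 2 from by ring]
    rw [div_le_iff₀ hlog2pos]
    have hRr : (0:ℝ) ≤ R * rot := by positivity
    nlinarith [hmain, mul_nonneg hRr (by linarith : (0:ℝ) ≤ Real.log 2 - 0.6931471803)]
  have hCR : (0:ℝ) < 18 * R := by linarith
  rw [div_le_iff₀ hCR]
  push_cast
  exact hgoal
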